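/- With the above notation, the function τ ↦ Γ(τ) is differentiable on (0, ∞) and for every τ > 0, Γ'(τ) = (T²/τ²) ∑_{k∈ℤ} λ_k k ∑_{p∈ℤ} ∑_{l∈ℤ} \overline{c_p} c_l ( φ̂'(a_{k,l}(τ)) φ̂(a_{k,p}(τ)) + φ̂'(a_{k,p}(τ)) φ̂(a_{k,l}(τ)) ), where φ̂' is the derivative of φ̂ and the double series converges absolutely. -/

import Mathlib

/-- The Fourier transform of the indicator function of `[-1/2, 1/2]`:
`φ̂(x) = sin(πx)/(πx)` for `x ≠ 0` and `φ̂(0) = 1`. -/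
noncomputable def phihat (x : ℝ) : ℝ :=
  if x = 0 then 1 else Real.sin (Real.pi * x) / (Real.pi * x)

open Real

noncomputable def phid (x : ℝ) : ℝ :=
  if x = 0 then 0 else
    (Real.pi * x * Real.cos (Real.pi * x) - Real.sin (Real.pi * x)) * Real.pi / (Real.pi * x) ^ 2

lemma abs_sin_sub_le {t : ℝ} (h : |t| ≤ 1) : |Real.sin t - t| ≤ |t| ^ 3 / 4 := by
  rcases lt_trichotomy t 0 with ht | ht | ht
  · have h1 : Real.sin (-t) < -t := Real.sin_lt (by linarith)
    have h2 : -t - (-t) ^ 3 / 4 < Real.sin (-t) := by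
      have h6 := Real.sin_gt_sub_cube (show 0 < -t by linarith)
      have h7 : 0 < (-t) ^ 3 := pow_pos (by linarith) 3
      linarith
    rw [Real.sin_neg] at h1 h2
    rw [abs_of_neg ht] at *
    rw [abs_le]
    constructor <;> nlinarith
  · simp [ht]
  · have h1 : Real.sin t < t := Real.sin_lt ht
    have h2 : t - t ^ 3 / 4 < Real.sin t := by
      have h6 := Real.sin_gt_sub_cube ht
      have h7 : 0 < t ^ 3 := pow_pos ht 3
      linarith
    rw [abs_of_pos ht, abs_le]
    constructor <;> nlinarith

lemma abs_mul_cos_sub_sin_le (t : ℝ) : |t * Real.cos t - Real.sin t| ≤ |t| ^ 3 := by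
  have key : ∀ s ∈ Set.uIcc (0:ℝ) t,
      HasDerivWithinAt (fun s => s * Real.cos s - Real.sin s)
        ((fun s => -(s * Real.sin s)) s) (Set.uIcc (0:ℝ) t) s := by
    intro s _
    have h1 : HasDerivAt (fun s : ℝ => s * Real.cos s - Real.sin s)
        (1 * Real.cos s + s * (-Real.sin s) - Real.cos s) s :=
      ((hasDerivAt_id s).mul (Real.hasDerivAt_cos s)).sub (Real.hasDerivAt_sin s)
    have h2 : (1 * Real.cos s + s * (-Real.sin s) - Real.cos s) = -(s * Real.sin s) := by ring
    rw [h2] at h1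
    exact h1.hasDerivWithinAt
  have hb : ∀ s ∈ Set.uIcc (0:ℝ) t, ‖(fun s => -(s * Real.sin s)) s‖ ≤ t ^ 2 := by
    intro s hs
    have hs' : |s| ≤ |t| := by
      rcases Set.mem_uIcc.1 hs with ⟨h1, h2⟩ | ⟨h1, h2⟩
      · rw [abs_of_nonneg h1]; exact le_trans h2 (le_abs_self t)
      · rw [abs_of_nonpos h2]; exact le_trans (neg_le_neg h1) (neg_le_abs t)
    have he : ‖-(s * Real.sin s)‖ = |s| * |Real.sin s| := by
      rw [norm_neg, Real.norm_eq_abs, abs_mul]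
    rw [he]
    have h3 : |Real.sin s| ≤ |s| := Real.abs_sin_le_abs
    calc |s| * |Real.sin s| ≤ |t| * |t| :=
          mul_le_mul hs' (le_trans h3 hs') (abs_nonneg _) (abs_nonneg _)
      _ = t ^ 2 := by rw [← abs_mul, abs_mul_self, sq]
  have key2 := Convex.norm_image_sub_le_of_norm_hasDerivWithin_le key hb (convex_uIcc (0:ℝ) t)
    Set.left_mem_uIcc Set.right_mem_uIcc
  simp only [Real.sin_zero, Real.cos_zero, mul_one, zero_mul, sub_zero, mul_zero] at key2
  rw [Real.norm_eq_abs, Real.norm_eq_abs] at key2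
  refine key2.trans (le_of_eq ?_)
  rw [← sq_abs]; ring

lemma phihat_hasDerivAt (x : ℝ) : HasDerivAt phihat (phid x) x := by
  rcases eq_or_ne x 0 with rfl | hx
  · rw [hasDerivAt_iff_tendsto_slope]
    have hb : ∀ᶠ y in nhdsWithin 0 {(0:ℝ)}ᶜ, ‖slope phihat 0 y‖ ≤ Real.pi ^ 2 / 4 * |y| := by
      filter_upwards [self_mem_nhdsWithin,
        eventually_nhdsWithin_of_eventually_nhds
          (eventually_abs_sub_lt 0 (by positivity : (0:ℝ) < 1 / Real.pi))] with y hy hy'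
      have hy0 : y ≠ 0 := hy
      have hπy0 : Real.pi * y ≠ 0 := mul_ne_zero Real.pi_ne_zero hy0
      rw [sub_zero] at hy'
      have hπy : |Real.pi * y| ≤ 1 := by
        rw [abs_mul, abs_of_pos Real.pi_pos]
        calc Real.pi * |y| ≤ Real.pi * (1 / Real.pi) :=
              mul_le_mul_of_nonneg_left hy'.le Real.pi_pos.le
          _ = 1 := by field_simp
      have h1 := abs_sin_sub_le hπy
      have hs : slope phihat 0 y = (Real.sin (Real.pi * y) - Real.pi * y) / (Real.pi * y * y) := by
        rw [slope_def_field]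
        simp only [phihat, if_neg hy0, if_pos rfl]
        field_simp
        simp
      rw [hs, Real.norm_eq_abs, abs_div]
      rw [div_le_iff₀ (by positivity : (0:ℝ) < |Real.pi * y * y|)]
      have he : |Real.pi * y * y| = Real.pi * |y| * |y| := by
        rw [abs_mul, abs_mul, abs_of_pos Real.pi_pos]
      rw [he]
      have h2 : |Real.pi * y| ^ 3 = Real.pi ^ 3 * |y| ^ 3 := by
        rw [abs_mul, abs_of_pos Real.pi_pos]; ring
      calc |Real.sin (Real.pi * y) - Real.pi * y| ≤ |Real.pi * y| ^ 3 / 4 := h1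
        _ = Real.pi ^ 3 * |y| ^ 3 / 4 := by rw [h2]
        _ ≤ Real.pi ^ 2 / 4 * |y| * (Real.pi * |y| * |y|) := by
            have : (0:ℝ) ≤ |y| := abs_nonneg y
            nlinarith [Real.pi_pos]
    have hz : phid 0 = 0 := by simp [phid]
    rw [hz]
    apply squeeze_zero_norm' hb
    have hcont : Continuous (fun y : ℝ => Real.pi ^ 2 / 4 * |y|) :=
      continuous_const.mul continuous_abs
    have h5 := hcont.tendsto (0:ℝ)
    simp only [abs_zero, mul_zero] at h5
    exact h5.mono_left nhdsWithin_le_nhds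
  · have hπx : Real.pi * x ≠ 0 := mul_ne_zero Real.pi_ne_zero hx
    have h1 : HasDerivAt (fun y : ℝ => Real.sin (Real.pi * y)) (Real.cos (Real.pi * x) * (Real.pi * 1)) x :=
      (Real.hasDerivAt_sin (Real.pi * x)).comp x ((hasDerivAt_id x).const_mul Real.pi)
    have h2 : HasDerivAt (fun y : ℝ => Real.pi * y) (Real.pi * 1) x :=
      (hasDerivAt_id x).const_mul Real.pi
    have hd := h1.div h2 hπx
    have heq : (fun y => Real.sin (Real.pi * y) / (Real.pi * y)) =ᶠ[nhds x] phihat := by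
      filter_upwards [eventually_ne_nhds hx] with y hy
      simp [phihat, hy]
    have hd2 := hd.congr_of_eventuallyEq heq.symm
    have hv : (Real.cos (Real.pi * x) * (Real.pi * 1) * (Real.pi * x) -
        Real.sin (Real.pi * x) * (Real.pi * 1)) / (Real.pi * x) ^ 2 = phid x := by
      rw [phid, if_neg hx]; ring_nf
    rwa [hv] at hd2

lemma deriv_phihat : deriv phihat = phid :=
  funext fun x => (phihat_hasDerivAt x).deriv

lemma abs_phihat_le (x : ℝ) : |phihat x| ≤ 1 := by
  rcases eq_or_ne x 0 with rfl | hx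
  · simp [phihat]
  · rw [phihat, if_neg hx, abs_div]
    rw [div_le_one (by positivity : (0:ℝ) < |Real.pi * x|)]
    exact Real.abs_sin_le_abs

lemma abs_phid_le (x : ℝ) : |phid x| ≤ 2 * Real.pi := by
  rcases eq_or_ne x 0 with rfl | hx
  · simp [phid]; positivity
  · rw [phid, if_neg hx]
    set t := Real.pi * x with ht
    have ht0 : t ≠ 0 := mul_ne_zero Real.pi_ne_zero hx
    have ht2 : (0:ℝ) < t ^ 2 := by positivity
    rw [abs_div, abs_mul, abs_of_pos Real.pi_pos, abs_of_pos ht2, div_le_iff₀ ht2]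
    have habs : |t| ^ 2 = t ^ 2 := sq_abs t
    rcases le_or_gt |t| 1 with h | h
    · have h3 := abs_mul_cos_sub_sin_le t
      have h4 : |t| ^ 3 ≤ t ^ 2 := by
        nlinarith [mul_nonneg (sub_nonneg.2 h) (sq_nonneg |t|), sq_abs t]
      have h5 : |t * Real.cos t - Real.sin t| * Real.pi ≤ t ^ 2 * Real.pi :=
        mul_le_mul_of_nonneg_right (h3.trans h4) Real.pi_pos.le
      nlinarith [h5, mul_pos Real.pi_pos ht2]
    · have h3 : |t * Real.cos t - Real.sin t| ≤ |t| + 1 := by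
        calc |t * Real.cos t - Real.sin t| ≤ |t * Real.cos t| + |Real.sin t| := abs_sub _ _
          _ ≤ |t| + 1 := by
            rw [abs_mul]
            have := Real.abs_cos_le_one t
            have := Real.abs_sin_le_one t
            nlinarith [abs_nonneg t]
      have h4 : |t| ≤ t ^ 2 := by
        nlinarith [mul_nonneg (abs_nonneg t) (sub_nonneg.2 h.le), sq_abs t]
      have h5 : |t * Real.cos t - Real.sin t| * Real.pi ≤ (|t| + 1) * Real.pi :=
        mul_le_mul_of_nonneg_right h3 Real.pi_pos.le
      nlinarith [h4, h5, mul_pos Real.pi_pos ht2,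
        mul_le_mul_of_nonneg_right h4 Real.pi_pos.le,
        mul_le_mul_of_nonneg_right (h.le.trans h4) Real.pi_pos.le]

lemma series_summable (r : ℝ) (c : ℤ → ℂ) (hc : Summable fun l : ℤ => ‖c l‖) (u : ℝ) :
    Summable fun l : ℤ => c l * (phihat (r * ((l : ℝ) - u)) : ℂ) := by
  apply Summable.of_norm_bounded hc
  intro l
  rw [norm_mul, Complex.norm_real]
  calc ‖c l‖ * ‖phihat (r * ((l:ℝ) - u))‖ ≤ ‖c l‖ * 1 :=
        mul_le_mul_of_nonneg_left (by rw [Real.norm_eq_abs]; exact abs_phihat_le _) (norm_nonneg _)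
    _ = ‖c l‖ := mul_one _

lemma series_summable' (r : ℝ) (c : ℤ → ℂ) (hc : Summable fun l : ℤ => ‖c l‖) (u : ℝ) :
    Summable fun l : ℤ => c l * (phid (r * ((l : ℝ) - u)) : ℂ) := by
  apply Summable.of_norm_bounded (hc.mul_right (2 * Real.pi))
  intro l
  rw [norm_mul, Complex.norm_real]
  exact mul_le_mul_of_nonneg_left (by rw [Real.norm_eq_abs]; exact abs_phid_le _) (norm_nonneg _)

lemma series_hasDerivAt (r : ℝ) (hr : 0 < r) (c : ℤ → ℂ)
    (hc : Summable fun l : ℤ => ‖c l‖) (u : ℝ) :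
    HasDerivAt (fun u : ℝ => ∑' l : ℤ, c l * (phihat (r * ((l : ℝ) - u)) : ℂ))
      (∑' l : ℤ, c l * ((phid (r * ((l : ℝ) - u)) * (r * -1) : ℝ) : ℂ)) u := by
  apply hasDerivAt_tsum (u := fun l : ℤ => ‖c l‖ * (2 * Real.pi * r)) (y₀ := 0)
    (g := fun l y => c l * ((phihat (r * ((l : ℝ) - y)) : ℝ) : ℂ))
    (g' := fun l y => c l * ((phid (r * ((l : ℝ) - y)) * (r * -1) : ℝ) : ℂ))
    (hc.mul_right _) ?_ ?_ ?_
  · intro l y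
    have hin : HasDerivAt (fun y : ℝ => r * ((l : ℝ) - y)) (r * -1) y :=
      ((hasDerivAt_id y).const_sub ((l : ℝ))).const_mul r
    have h2 := (phihat_hasDerivAt (r * ((l : ℝ) - y))).comp y hin
    exact h2.ofReal_comp.const_mul (c l)
  · intro l y
    rw [norm_mul, Complex.norm_real, Real.norm_eq_abs, abs_mul]
    apply mul_le_mul_of_nonneg_left _ (norm_nonneg _)
    have h1 := abs_phid_le (r * ((l : ℝ) - y))
    have h2 : |r * -1| = r := by rw [abs_mul]; simp [abs_of_pos hr]
    rw [h2]
    exact mul_le_mul_of_nonneg_right h1 hr.le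
  · exact series_summable r c hc 0

lemma normsq_hasDerivAt {f : ℝ → ℂ} {w : ℂ} {x : ℝ} (hf : HasDerivAt f w x) :
    HasDerivAt (fun s => ‖f s‖ ^ 2) (2 * ((starRingEnd ℂ) (f x) * w).re) x := by
  have hre : HasDerivAt (fun s => (f s).re) w.re x :=
    Complex.reCLM.hasFDerivAt.comp_hasDerivAt x hf
  have him : HasDerivAt (fun s => (f s).im) w.im x :=
    Complex.imCLM.hasFDerivAt.comp_hasDerivAt x hf
  have h3 := (hre.mul hre).add (him.mul him)
  have heq : (fun s => (f s).re * (f s).re + (f s).im * (f s).im) =ᶠ[nhds x]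
      (fun s => ‖f s‖ ^ 2) := by
    apply Filter.Eventually.of_forall
    intro s
    show (f s).re * (f s).re + (f s).im * (f s).im = ‖f s‖ ^ 2
    rw [Complex.sq_norm, Complex.normSq_apply]
  have h4 := h3.congr_of_eventuallyEq heq.symm
  have hval : w.re * (f x).re + (f x).re * w.re + (w.im * (f x).im + (f x).im * w.im)
      = 2 * ((starRingEnd ℂ) (f x) * w).re := by
    simp [Complex.mul_re]
    ring
  rwa [hval] at h4

/-- With `a_{k,l}(τ) = (T/θ)(l - kθ/τ)` and
`Γ(τ) = T ∑_k λ_k |∑_l c_l φ̂(a_{k,l}(τ))|²`, the function `Γ` is differentiable on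
`(0, ∞)` with `Γ'(τ) = (T²/τ²) ∑_k λ_k k ∑_{p,l} c̄_p c_l
(φ̂'(a_{k,l}(τ)) φ̂(a_{k,p}(τ)) + φ̂'(a_{k,p}(τ)) φ̂(a_{k,l}(τ)))`,
the double series converging absolutely. -/
theorem stmt_11 (T θ : ℝ) (hT : 0 < T) (hθ : 0 < θ)
    (c : ℤ → ℂ) (hc : Summable fun l : ℤ => ‖c l‖)
    (N : ℕ) (hN : 0 < N) (lam : ℤ → ℝ)
    (hlam0 : lam 0 = 0) (hsym : ∀ k : ℤ, lam (-k) = lam k)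
    (hrange : ∀ k : ℤ, 0 ≤ lam k ∧ lam k ≤ 1)
    (hsupp : ∀ k : ℤ, (N : ℤ) < |k| → lam k = 0)
    (τ : ℝ) (hτ : 0 < τ) :
    ∃ D : ℝ,
      HasDerivAt (fun s : ℝ => T * ∑' k : ℤ, lam k *
          ‖∑' l : ℤ, c l * (phihat ((T / θ) * ((l : ℝ) - (k : ℝ) * θ / s)) : ℂ)‖ ^ 2) D τ ∧
      (∀ k : ℤ, Summable fun pl : ℤ × ℤ =>
        ‖(starRingEnd ℂ) (c pl.1) * c pl.2 *
          ((deriv phihat ((T / θ) * ((pl.2 : ℝ) - (k : ℝ) * θ / τ)) *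
              phihat ((T / θ) * ((pl.1 : ℝ) - (k : ℝ) * θ / τ)) +
            deriv phihat ((T / θ) * ((pl.1 : ℝ) - (k : ℝ) * θ / τ)) *
              phihat ((T / θ) * ((pl.2 : ℝ) - (k : ℝ) * θ / τ)) : ℝ) : ℂ)‖) ∧
      (D : ℂ) = ((T ^ 2 / τ ^ 2 : ℝ) : ℂ) * ∑' k : ℤ, ((lam k * (k : ℝ) : ℝ) : ℂ) *
        ∑' pl : ℤ × ℤ, (starRingEnd ℂ) (c pl.1) * c pl.2 *
          ((deriv phihat ((T / θ) * ((pl.2 : ℝ) - (k : ℝ) * θ / τ)) *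
              phihat ((T / θ) * ((pl.1 : ℝ) - (k : ℝ) * θ / τ)) +
            deriv phihat ((T / θ) * ((pl.1 : ℝ) - (k : ℝ) * θ / τ)) *
              phihat ((T / θ) * ((pl.2 : ℝ) - (k : ℝ) * θ / τ)) : ℝ) : ℂ) := by
  have hτ0 : τ ≠ 0 := hτ.ne'
  have hθ0 : θ ≠ 0 := hθ.ne'
  have hr : 0 < T / θ := div_pos hT hθ
  set S : Finset ℤ := Finset.Icc (-(N : ℤ)) (N : ℤ) with hS
  have hoff : ∀ k : ℤ, k ∉ S → lam k = 0 := by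
    intro k hk
    apply hsupp
    rw [hS, Finset.mem_Icc] at hk
    rcases abs_cases k with ⟨h1, h2⟩ | ⟨h1, h2⟩ <;> rw [h1] <;> omega
  -- derivative of inner sum
  have hGd : ∀ k : ℤ, HasDerivAt
      (fun s : ℝ => ∑' l : ℤ, c l * (phihat ((T / θ) * ((l : ℝ) - (k : ℝ) * θ / s)) : ℂ))
      (((k : ℝ) * θ * -(τ ^ 2)⁻¹) • ∑' l : ℤ,
        c l * ((phid ((T / θ) * ((l : ℝ) - (k : ℝ) * θ / τ)) * ((T / θ) * -1) : ℝ) : ℂ)) τ := by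
    intro k
    have hh : HasDerivAt (fun s : ℝ => (k : ℝ) * θ / s) ((k : ℝ) * θ * -(τ ^ 2)⁻¹) τ := by
      simpa only [div_eq_mul_inv] using (hasDerivAt_inv hτ0).const_mul ((k : ℝ) * θ)
    exact (series_hasDerivAt (T / θ) hr c hc ((k : ℝ) * θ / τ)).scomp τ hh
  -- rewrite derivative value
  have hWval : ∀ k : ℤ,
      (((k : ℝ) * θ * -(τ ^ 2)⁻¹) • ∑' l : ℤ,
        c l * ((phid ((T / θ) * ((l : ℝ) - (k : ℝ) * θ / τ)) * ((T / θ) * -1) : ℝ) : ℂ))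
      = ((T * (k : ℝ) / τ ^ 2 : ℝ) : ℂ) *
        ∑' l : ℤ, c l * ((phid ((T / θ) * ((l : ℝ) - (k : ℝ) * θ / τ)) : ℝ) : ℂ) := by
    intro k
    have h1 : (∑' l : ℤ, c l * ((phid ((T / θ) * ((l : ℝ) - (k : ℝ) * θ / τ)) * ((T / θ) * -1) : ℝ) : ℂ))
        = (((T / θ) * -1 : ℝ) : ℂ) *
          ∑' l : ℤ, c l * ((phid ((T / θ) * ((l : ℝ) - (k : ℝ) * θ / τ)) : ℝ) : ℂ) := by
      rw [← tsum_mul_left]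
      exact tsum_congr fun l => by push_cast; ring
    rw [h1, Complex.real_smul, ← mul_assoc, ← Complex.ofReal_mul]
    congr 1
    rw [Complex.ofReal_inj]
    field_simp
  have hGd' : ∀ k : ℤ, HasDerivAt
      (fun s : ℝ => ∑' l : ℤ, c l * (phihat ((T / θ) * ((l : ℝ) - (k : ℝ) * θ / s)) : ℂ))
      (((T * (k : ℝ) / τ ^ 2 : ℝ) : ℂ) *
        ∑' l : ℤ, c l * ((phid ((T / θ) * ((l : ℝ) - (k : ℝ) * θ / τ)) : ℝ) : ℂ)) τ := by
    intro k
    have h := hGd k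
    rwa [hWval k] at h
  refine ⟨T * ∑ k ∈ S, lam k * (2 * ((starRingEnd ℂ)
      (∑' l : ℤ, c l * (phihat ((T / θ) * ((l : ℝ) - (k : ℝ) * θ / τ)) : ℂ)) *
      (((T * (k : ℝ) / τ ^ 2 : ℝ) : ℂ) *
        ∑' l : ℤ, c l * ((phid ((T / θ) * ((l : ℝ) - (k : ℝ) * θ / τ)) : ℝ) : ℂ))).re), ?_, ?_, ?_⟩
  · -- HasDerivAt
    have hterm : ∀ k ∈ S, HasDerivAt
        (fun s : ℝ => lam k *
          ‖∑' l : ℤ, c l * (phihat ((T / θ) * ((l : ℝ) - (k : ℝ) * θ / s)) : ℂ)‖ ^ 2)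
        (lam k * (2 * ((starRingEnd ℂ)
          (∑' l : ℤ, c l * (phihat ((T / θ) * ((l : ℝ) - (k : ℝ) * θ / τ)) : ℂ)) *
          (((T * (k : ℝ) / τ ^ 2 : ℝ) : ℂ) *
            ∑' l : ℤ, c l * ((phid ((T / θ) * ((l : ℝ) - (k : ℝ) * θ / τ)) : ℝ) : ℂ))).re)) τ := by
      intro k _
      exact (normsq_hasDerivAt (hGd' k)).const_mul (lam k)
    have hfin := (HasDerivAt.sum hterm).const_mul T
    apply hfin.congr_of_eventuallyEq
    apply Filter.Eventually.of_forall
    intro s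
    show T * _ = T * _
    congr 1
    rw [Finset.sum_apply]
    exact tsum_eq_sum fun k hk => by rw [hoff k hk]; simp
  · -- summability
    intro k
    rw [deriv_phihat]
    apply Summable.of_nonneg_of_le (fun pl => norm_nonneg _) ?_
      (((hc.mul_of_nonneg hc (fun _ => norm_nonneg _) (fun _ => norm_nonneg _))).mul_right
        (4 * Real.pi))
    intro pl
    rw [norm_mul, norm_mul, Complex.norm_real]
    have h1 : ‖(starRingEnd ℂ) (c pl.1)‖ = ‖c pl.1‖ := by simp
    rw [h1]
    apply mul_le_mul_of_nonneg_left _ (by positivity)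
    rw [Real.norm_eq_abs]
    calc |phid ((T / θ) * ((pl.2 : ℝ) - (k : ℝ) * θ / τ)) *
            phihat ((T / θ) * ((pl.1 : ℝ) - (k : ℝ) * θ / τ)) +
          phid ((T / θ) * ((pl.1 : ℝ) - (k : ℝ) * θ / τ)) *
            phihat ((T / θ) * ((pl.2 : ℝ) - (k : ℝ) * θ / τ))|
        ≤ |phid ((T / θ) * ((pl.2 : ℝ) - (k : ℝ) * θ / τ)) *
            phihat ((T / θ) * ((pl.1 : ℝ) - (k : ℝ) * θ / τ))| +
          |phid ((T / θ) * ((pl.1 : ℝ) - (k : ℝ) * θ / τ)) *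
            phihat ((T / θ) * ((pl.2 : ℝ) - (k : ℝ) * θ / τ))| := abs_add_le _ _
      _ ≤ 2 * Real.pi * 1 + 2 * Real.pi * 1 := by
          apply add_le_add <;>
          · rw [abs_mul]
            exact mul_le_mul (abs_phid_le _) (abs_phihat_le _) (abs_nonneg _) (by positivity)
      _ ≤ 4 * Real.pi := by nlinarith [Real.pi_pos]
  · -- formula for D
    rw [deriv_phihat]
    -- summability helpers
    have sA : ∀ k : ℤ, Summable fun p : ℤ =>
        ‖(starRingEnd ℂ) (c p) * (phihat ((T / θ) * ((p : ℝ) - (k : ℝ) * θ / τ)) : ℂ)‖ := by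
      intro k
      apply Summable.of_nonneg_of_le (fun p => norm_nonneg _) _ hc
      intro p
      rw [norm_mul, Complex.norm_real]
      have h1 : ‖(starRingEnd ℂ) (c p)‖ = ‖c p‖ := by simp
      rw [h1, Real.norm_eq_abs]
      calc ‖c p‖ * |phihat ((T / θ) * ((p : ℝ) - (k : ℝ) * θ / τ))| ≤ ‖c p‖ * 1 :=
            mul_le_mul_of_nonneg_left (abs_phihat_le _) (norm_nonneg _)
        _ = ‖c p‖ := mul_one _
    have sB : ∀ k : ℤ, Summable fun l : ℤ =>
        ‖c l * ((phid ((T / θ) * ((l : ℝ) - (k : ℝ) * θ / τ)) : ℝ) : ℂ)‖ := by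
      intro k
      apply Summable.of_nonneg_of_le (fun l => norm_nonneg _) _ (hc.mul_right (2 * Real.pi))
      intro l
      rw [norm_mul, Complex.norm_real, Real.norm_eq_abs]
      exact mul_le_mul_of_nonneg_left (abs_phid_le _) (norm_nonneg _)
    have sA' : ∀ k : ℤ, Summable fun p : ℤ =>
        ‖(starRingEnd ℂ) (c p) * ((phid ((T / θ) * ((p : ℝ) - (k : ℝ) * θ / τ)) : ℝ) : ℂ)‖ := by
      intro k
      apply Summable.of_nonneg_of_le (fun p => norm_nonneg _) _ (hc.mul_right (2 * Real.pi))
      intro p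
      rw [norm_mul, Complex.norm_real, Real.norm_eq_abs]
      have h1 : ‖(starRingEnd ℂ) (c p)‖ = ‖c p‖ := by simp
      rw [h1]
      exact mul_le_mul_of_nonneg_left (abs_phid_le _) (norm_nonneg _)
    have sB' : ∀ k : ℤ, Summable fun l : ℤ =>
        ‖c l * (phihat ((T / θ) * ((l : ℝ) - (k : ℝ) * θ / τ)) : ℂ)‖ := by
      intro k
      apply Summable.of_nonneg_of_le (fun l => norm_nonneg _) _ hc
      intro l
      rw [norm_mul, Complex.norm_real, Real.norm_eq_abs]
      calc ‖c l‖ * |phihat ((T / θ) * ((l : ℝ) - (k : ℝ) * θ / τ))| ≤ ‖c l‖ * 1 :=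
            mul_le_mul_of_nonneg_left (abs_phihat_le _) (norm_nonneg _)
        _ = ‖c l‖ := mul_one _
    -- conjugation of sums
    have hconjA : ∀ k : ℤ, (starRingEnd ℂ)
        (∑' l : ℤ, c l * (phihat ((T / θ) * ((l : ℝ) - (k : ℝ) * θ / τ)) : ℂ))
        = ∑' p : ℤ, (starRingEnd ℂ) (c p) *
            (phihat ((T / θ) * ((p : ℝ) - (k : ℝ) * θ / τ)) : ℂ) := by
      intro k
      rw [starRingEnd_apply, tsum_star]
      refine tsum_congr fun p => ?_
      rw [star_mul', ← starRingEnd_apply, ← starRingEnd_apply, Complex.conj_ofReal]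
    have hconjB : ∀ k : ℤ, (starRingEnd ℂ)
        (∑' l : ℤ, c l * ((phid ((T / θ) * ((l : ℝ) - (k : ℝ) * θ / τ)) : ℝ) : ℂ))
        = ∑' p : ℤ, (starRingEnd ℂ) (c p) *
            ((phid ((T / θ) * ((p : ℝ) - (k : ℝ) * θ / τ)) : ℝ) : ℂ) := by
      intro k
      rw [starRingEnd_apply, tsum_star]
      refine tsum_congr fun p => ?_
      rw [star_mul', ← starRingEnd_apply, ← starRingEnd_apply, Complex.conj_ofReal]
    -- the double sum identity
    have hSk : ∀ k : ℤ,
        (∑' pl : ℤ × ℤ, (starRingEnd ℂ) (c pl.1) * c pl.2 *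
          ((phid ((T / θ) * ((pl.2 : ℝ) - (k : ℝ) * θ / τ)) *
              phihat ((T / θ) * ((pl.1 : ℝ) - (k : ℝ) * θ / τ)) +
            phid ((T / θ) * ((pl.1 : ℝ) - (k : ℝ) * θ / τ)) *
              phihat ((T / θ) * ((pl.2 : ℝ) - (k : ℝ) * θ / τ)) : ℝ) : ℂ))
        = (starRingEnd ℂ)
            (∑' l : ℤ, c l * (phihat ((T / θ) * ((l : ℝ) - (k : ℝ) * θ / τ)) : ℂ)) *
          (∑' l : ℤ, c l * ((phid ((T / θ) * ((l : ℝ) - (k : ℝ) * θ / τ)) : ℝ) : ℂ)) +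
          (starRingEnd ℂ)
            (∑' l : ℤ, c l * ((phid ((T / θ) * ((l : ℝ) - (k : ℝ) * θ / τ)) : ℝ) : ℂ)) *
          (∑' l : ℤ, c l * (phihat ((T / θ) * ((l : ℝ) - (k : ℝ) * θ / τ)) : ℂ)) := by
      intro k
      have e1 : ∀ pl : ℤ × ℤ, (starRingEnd ℂ) (c pl.1) * c pl.2 *
          ((phid ((T / θ) * ((pl.2 : ℝ) - (k : ℝ) * θ / τ)) *
              phihat ((T / θ) * ((pl.1 : ℝ) - (k : ℝ) * θ / τ)) +
            phid ((T / θ) * ((pl.1 : ℝ) - (k : ℝ) * θ / τ)) *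
              phihat ((T / θ) * ((pl.2 : ℝ) - (k : ℝ) * θ / τ)) : ℝ) : ℂ)
          = ((starRingEnd ℂ) (c pl.1) *
              (phihat ((T / θ) * ((pl.1 : ℝ) - (k : ℝ) * θ / τ)) : ℂ)) *
            (c pl.2 * ((phid ((T / θ) * ((pl.2 : ℝ) - (k : ℝ) * θ / τ)) : ℝ) : ℂ)) +
            ((starRingEnd ℂ) (c pl.1) *
              ((phid ((T / θ) * ((pl.1 : ℝ) - (k : ℝ) * θ / τ)) : ℝ) : ℂ)) *
            (c pl.2 * (phihat ((T / θ) * ((pl.2 : ℝ) - (k : ℝ) * θ / τ)) : ℂ)) := by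
        intro pl
        push_cast
        ring
      rw [tsum_congr e1, Summable.tsum_add (summable_mul_of_summable_norm (sA k) (sB k))
        (summable_mul_of_summable_norm (sA' k) (sB' k)),
        ← tsum_mul_tsum_of_summable_norm (sA k) (sB k),
        ← tsum_mul_tsum_of_summable_norm (sA' k) (sB' k), ← hconjA k, ← hconjB k]
    -- reduce the tsum over k to the finite sum
    have hzero : ∀ k : ℤ, k ∉ S → ((lam k * (k : ℝ) : ℝ) : ℂ) *
        ∑' pl : ℤ × ℤ, (starRingEnd ℂ) (c pl.1) * c pl.2 *
          ((phid ((T / θ) * ((pl.2 : ℝ) - (k : ℝ) * θ / τ)) *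
              phihat ((T / θ) * ((pl.1 : ℝ) - (k : ℝ) * θ / τ)) +
            phid ((T / θ) * ((pl.1 : ℝ) - (k : ℝ) * θ / τ)) *
              phihat ((T / θ) * ((pl.2 : ℝ) - (k : ℝ) * θ / τ)) : ℝ) : ℂ) = 0 := by
      intro k hk
      rw [hoff k hk]
      simp
    rw [tsum_eq_sum hzero]
    -- per-k rewriting on the RHS
    have hrhs : ∀ k ∈ S, ((lam k * (k : ℝ) : ℝ) : ℂ) *
        ∑' pl : ℤ × ℤ, (starRingEnd ℂ) (c pl.1) * c pl.2 *
          ((phid ((T / θ) * ((pl.2 : ℝ) - (k : ℝ) * θ / τ)) *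
              phihat ((T / θ) * ((pl.1 : ℝ) - (k : ℝ) * θ / τ)) +
            phid ((T / θ) * ((pl.1 : ℝ) - (k : ℝ) * θ / τ)) *
              phihat ((T / θ) * ((pl.2 : ℝ) - (k : ℝ) * θ / τ)) : ℝ) : ℂ)
        = (((lam k * (k : ℝ)) * (2 * ((starRingEnd ℂ)
            (∑' l : ℤ, c l * (phihat ((T / θ) * ((l : ℝ) - (k : ℝ) * θ / τ)) : ℂ)) *
            (∑' l : ℤ, c l * ((phid ((T / θ) * ((l : ℝ) - (k : ℝ) * θ / τ)) : ℝ) : ℂ))).re) : ℝ) : ℂ) := by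
      intro k _
      rw [hSk k]
      have h2 : (starRingEnd ℂ)
          (∑' l : ℤ, c l * ((phid ((T / θ) * ((l : ℝ) - (k : ℝ) * θ / τ)) : ℝ) : ℂ)) *
          (∑' l : ℤ, c l * (phihat ((T / θ) * ((l : ℝ) - (k : ℝ) * θ / τ)) : ℂ))
          = (starRingEnd ℂ) ((starRingEnd ℂ)
            (∑' l : ℤ, c l * (phihat ((T / θ) * ((l : ℝ) - (k : ℝ) * θ / τ)) : ℂ)) *
            (∑' l : ℤ, c l * ((phid ((T / θ) * ((l : ℝ) - (k : ℝ) * θ / τ)) : ℝ) : ℂ))) := by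
        rw [map_mul, Complex.conj_conj]
        ring
      rw [h2, Complex.add_conj]
      push_cast
      ring
    rw [Finset.sum_congr rfl hrhs]
    rw [← Complex.ofReal_sum, ← Complex.ofReal_mul, Complex.ofReal_inj]
    -- now a real identity
    rw [Finset.mul_sum, Finset.mul_sum]
    refine Finset.sum_congr rfl fun k hk => ?_
    have hre : ((starRingEnd ℂ)
        (∑' l : ℤ, c l * (phihat ((T / θ) * ((l : ℝ) - (k : ℝ) * θ / τ)) : ℂ)) *
        (((T * (k : ℝ) / τ ^ 2 : ℝ) : ℂ) *
          ∑' l : ℤ, c l * ((phid ((T / θ) * ((l : ℝ) - (k : ℝ) * θ / τ)) : ℝ) : ℂ))).re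
        = (T * (k : ℝ) / τ ^ 2) * ((starRingEnd ℂ)
        (∑' l : ℤ, c l * (phihat ((T / θ) * ((l : ℝ) - (k : ℝ) * θ / τ)) : ℂ)) *
        (∑' l : ℤ, c l * ((phid ((T / θ) * ((l : ℝ) - (k : ℝ) * θ / τ)) : ℝ) : ℂ))).re := by
      rw [show (starRingEnd ℂ)
          (∑' l : ℤ, c l * (phihat ((T / θ) * ((l : ℝ) - (k : ℝ) * θ / τ)) : ℂ)) *
          (((T * (k : ℝ) / τ ^ 2 : ℝ) : ℂ) *
            ∑' l : ℤ, c l * ((phid ((T / θ) * ((l : ℝ) - (k : ℝ) * θ / τ)) : ℝ) : ℂ))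
          = ((T * (k : ℝ) / τ ^ 2 : ℝ) : ℂ) * ((starRingEnd ℂ)
          (∑' l : ℤ, c l * (phihat ((T / θ) * ((l : ℝ) - (k : ℝ) * θ / τ)) : ℂ)) *
          (∑' l : ℤ, c l * ((phid ((T / θ) * ((l : ℝ) - (k : ℝ) * θ / τ)) : ℝ) : ℂ))) from by ring,
        Complex.re_ofReal_mul]
    rw [hre]
    ring
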